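/- arXiv:2210.10384 — 2 statements merged into one kernel-verified Lean document; each statement's English description precedes it below -/
import Mathlib

section
/- For every countable ordinal α there exists a completely metrizable topological space X_α and a subset A_α ⊂ X_α such that the oscillation rank of the characteristic function χ_{A_α} equals exactly α. -/
open Set Filter Ordinal ENNReal

universe u v

section Defs

variable {X : Type u} {E : Type v}

/-- `f` restricted to `A` is `ε`-fragmented: every nonempty subset of `A` has a relatively
open nonempty piece on which the oscillation (diameter of the image) of `f` is at most `ε`. -/
def EpsFragOn [TopologicalSpace X] [PseudoEMetricSpace E] (f : X → E) (A : Set X)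
    (ε : ℝ≥0∞) : Prop :=
  ∀ F : Set X, F ⊆ A → F.Nonempty → ∃ V : Set X, IsOpen V ∧ (V ∩ F).Nonempty ∧
    EMetric.diam (f '' (V ∩ F)) ≤ ε

/-- The fragmentability index `frag f = inf {ε > 0 : f is ε-fragmented}` (with `inf ∅ = ∞`). -/
noncomputable def fragIdx [TopologicalSpace X] [PseudoEMetricSpace E] (f : X → E) : ℝ≥0∞ :=
  sInf {ε | 0 < ε ∧ EpsFragOn f Set.univ ε}

/-- A set `H` is resolvable: every nonempty `A ⊆ X` has a relatively open nonempty piece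
entirely inside `H` or entirely inside its complement. -/
def Resolvable [TopologicalSpace X] (H : Set X) : Prop :=
  ∀ A : Set X, A.Nonempty → ∃ U : Set X, IsOpen U ∧ (U ∩ A).Nonempty ∧
    (U ∩ A ⊆ H ∨ U ∩ A ⊆ Hᶜ)

/-- The σ-fragmentability index by resolvable sets. -/
noncomputable def sfragIdx [TopologicalSpace X] [PseudoEMetricSpace E] (f : X → E) : ℝ≥0∞ :=
  sInf {ε | 0 < ε ∧ ∃ H : ℕ → Set X, (∀ n, Resolvable (H n)) ∧ (⋃ n, H n) = Set.univ ∧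
    ∀ n, EpsFragOn f (H n) ε}

/-- `g` is constant on each set of some resolvable partition of `X`, i.e. on each difference
`U (γ+1) \ U γ` of an increasing transfinite sequence of open sets from `∅` to `X`,
continuous at limit ordinals. -/
def ConstOnResolvablePartition [TopologicalSpace X] (g : X → E) : Prop :=
  ∃ (κ : Ordinal.{u}) (U : Ordinal.{u} → Set X),
    (∀ α, IsOpen (U α)) ∧ (∀ α β : Ordinal, α ≤ β → U α ⊆ U β) ∧
    U 0 = ∅ ∧ U κ = Set.univ ∧
    (∀ γ, γ ≤ κ → Order.IsSuccLimit γ → U γ = ⋃ α < γ, U α) ∧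
    (∀ γ < κ, ∀ x ∈ U (γ + 1) \ U γ, ∀ y ∈ U (γ + 1) \ U γ, g x = g y)

/-- The transfinite derivation of open sets in the definition of the oscillation rank
`β(f, ε)`:  `U 0 = ∅`, `U (α+1) = U α ∪ {x ∉ U α : ∃ open V ∋ x, diam f (V \ U α) < ε}`,
and unions at limit ordinals. -/
noncomputable def oscSet [TopologicalSpace X] [PseudoEMetricSpace E] (f : X → E)
    (ε : ℝ≥0∞) (o : Ordinal.{u}) : Set X :=
  Ordinal.limitRecOn o ∅
    (fun _ U => U ∪ {x | x ∉ U ∧ ∃ V : Set X, IsOpen V ∧ x ∈ V ∧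
      EMetric.diam (f '' (V \ U)) < ε})
    (fun γ _ ih => ⋃ (β : Ordinal) (h : β < γ), ih β h)

/-- `f` has countable oscillation rank: `β(f) < ω₁`, i.e. for every `ε > 0` the derivation
reaches `X` at some countable ordinal. -/
def CountableOscRank [TopologicalSpace X] [PseudoEMetricSpace E] (f : X → E) : Prop :=
  ∀ ε : ℝ≥0∞, 0 < ε → ∃ α < ω₁, oscSet f ε α = Set.univ

/-- A transfinite sequence `(V α)_{α ≤ κ}` of open sets has property `*(f, ε)`. -/
def StarProp [TopologicalSpace X] [PseudoEMetricSpace E] (f : X → E) (ε : ℝ≥0∞)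
    (κ : Ordinal.{u}) (V : Ordinal.{u} → Set X) : Prop :=
  (∀ α, α ≤ κ → IsOpen (V α)) ∧ (∀ α β : Ordinal, α ≤ β → β ≤ κ → V α ⊆ V β) ∧
  V 0 = ∅ ∧ V κ = Set.univ ∧
  (∀ γ, γ ≤ κ → Order.IsSuccLimit γ → V γ = ⋃ α < γ, V α) ∧
  (∀ α < κ, ∀ x ∈ V (α + 1) \ V α, ∃ W : Set X, IsOpen W ∧ x ∈ W ∧
    EMetric.diam (f '' (W \ V α)) < ε)

/-- Uniform distance `d(f, g) = sup_x ρ(f x, g x)` (in `[0, ∞]`). -/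
noncomputable def unifDist [PseudoEMetricSpace E] (f g : X → E) : ℝ≥0∞ :=
  ⨆ x, edist (f x) (g x)

/-- Distance from `f` to the family of σ-fragmented mappings. -/
noncomputable def distToSFrag [TopologicalSpace X] [PseudoEMetricSpace E] (f : X → E) : ℝ≥0∞ :=
  ⨅ (g : {g : X → E // sfragIdx g = 0}), unifDist f g.1

end Defs

/-- The oscillation rank of the characteristic function of `A` equals exactly `a`. -/
def IndicatorOscRankExactly {X : Type u} [TopologicalSpace X] (A : Set X)
    (a : Ordinal.{u}) : Prop :=
  (∀ ε : ℝ≥0∞, 0 < ε →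
    ∃ b ≤ a, oscSet (A.indicator (fun _ => (1 : ℝ))) ε b = Set.univ) ∧
  (∀ a' < a, ∃ ε : ℝ≥0∞, 0 < ε ∧
    ∀ b ≤ a', oscSet (A.indicator (fun _ => (1 : ℝ))) ε b ≠ Set.univ)


section Aux

open Set Filter Ordinal ENNReal Topology

/- ### Basic lemmas about `oscSet` -/

theorem oscSet_zero {X : Type u} {E : Type v} [TopologicalSpace X] [PseudoEMetricSpace E]
    (f : X → E) (ε : ℝ≥0∞) : oscSet f ε 0 = ∅ := Ordinal.limitRecOn_zero ..

theorem oscSet_succ {X : Type u} {E : Type v} [TopologicalSpace X] [PseudoEMetricSpace E]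
    (f : X → E) (ε : ℝ≥0∞) (b : Ordinal.{u}) : oscSet f ε (b + 1) =
    oscSet f ε b ∪ {x | x ∉ oscSet f ε b ∧ ∃ V : Set X, IsOpen V ∧ x ∈ V ∧
      EMetric.diam (f '' (V \ oscSet f ε b)) < ε} := by
  rw [oscSet, Ordinal.add_one_eq_succ, Ordinal.limitRecOn_succ]
  rfl

theorem oscSet_limit {X : Type u} {E : Type v} [TopologicalSpace X] [PseudoEMetricSpace E]
    (f : X → E) (ε : ℝ≥0∞) {γ : Ordinal.{u}} (h : Order.IsSuccLimit γ) :
    oscSet f ε γ = ⋃ b < γ, oscSet f ε b := by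
  rw [oscSet, Ordinal.limitRecOn_limit _ _ _ _ h]
  rfl

theorem oscSet_congr {X : Type u} {E : Type v} {E' : Type w} [TopologicalSpace X]
    [PseudoEMetricSpace E] [PseudoEMetricSpace E'] {f : X → E} {g : X → E'} {ε δ : ℝ≥0∞}
    (h : ∀ s : Set X, EMetric.diam (f '' s) < ε ↔ EMetric.diam (g '' s) < δ)
    (b : Ordinal.{u}) : oscSet f ε b = oscSet g δ b := by
  induction b using Ordinal.limitRecOn with
  | zero => rw [oscSet_zero, oscSet_zero]
  | add_one b ih =>
    rw [oscSet_succ, oscSet_succ, ih]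
    ext x
    simp only [Set.mem_union, Set.mem_setOf_eq]
    constructor
    · rintro (h1 | ⟨h1, V, hV, hxV, hd⟩)
      · exact Or.inl h1
      · exact Or.inr ⟨h1, V, hV, hxV, (h _).mp hd⟩
    · rintro (h1 | ⟨h1, V, hV, hxV, hd⟩)
      · exact Or.inl h1
      · exact Or.inr ⟨h1, V, hV, hxV, (h _).mpr hd⟩
  | limit b hb ih =>
    rw [oscSet_limit _ _ hb, oscSet_limit _ _ hb]
    exact Set.iUnion₂_congr fun c hc => ih c hc

/- ### Indicator functions -/

/-- abbreviation for the indicator function -/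
noncomputable def indf {X : Type u} (A : Set X) : X → ℝ := A.indicator (fun _ => (1 : ℝ))

theorem indf_mem_pair {X : Type u} (A : Set X) (x : X) : indf A x = 0 ∨ indf A x = 1 := by
  by_cases h : x ∈ A
  · exact Or.inr (Set.indicator_of_mem h _)
  · exact Or.inl (Set.indicator_of_notMem h _)

theorem indf_edist_le_one {X : Type u} (A : Set X) (x y : X) :
    edist (indf A x) (indf A y) ≤ 1 := by
  rw [edist_dist, Real.dist_eq]
  rcases indf_mem_pair A x with h1 | h1 <;> rcases indf_mem_pair A y with h2 | h2 <;>
    rw [h1, h2] <;> norm_num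

theorem indf_edist_eq_one {X : Type u} (A : Set X) {x y : X} (h : indf A x ≠ indf A y) :
    edist (indf A x) (indf A y) = 1 := by
  rw [edist_dist, Real.dist_eq]
  rcases indf_mem_pair A x with h1 | h1 <;> rcases indf_mem_pair A y with h2 | h2 <;>
    rw [h1, h2] at h ⊢ <;> first | (exact absurd rfl h) | norm_num

theorem indf_diam_le_one {X : Type u} (A : Set X) (s : Set X) :
    EMetric.diam (indf A '' s) ≤ 1 := by
  apply EMetric.diam_le
  rintro _ ⟨x, -, rfl⟩ _ ⟨y, -, rfl⟩
  exact indf_edist_le_one A x y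

theorem indf_diam_lt_iff {X : Type u} (A : Set X) {ε : ℝ≥0∞} (h0 : 0 < ε) (h1 : ε ≤ 1)
    (s : Set X) :
    EMetric.diam (indf A '' s) < ε ↔ ∀ x ∈ s, ∀ y ∈ s, indf A x = indf A y := by
  constructor
  · intro hd x hx y hy
    by_contra hne
    have : (1 : ℝ≥0∞) ≤ EMetric.diam (indf A '' s) := by
      rw [← indf_edist_eq_one A hne]
      exact EMetric.edist_le_diam_of_mem ⟨x, hx, rfl⟩ ⟨y, hy, rfl⟩
    exact absurd (lt_of_lt_of_le hd h1) (not_lt.mpr this)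
  · intro hc
    have hs : (indf A '' s).Subsingleton := by
      rintro _ ⟨x, hx, rfl⟩ _ ⟨y, hy, rfl⟩
      exact hc x hx y hy
    exact lt_of_eq_of_lt (EMetric.diam_subsingleton hs) h0

theorem oscSet_indf_eps {X : Type u} [TopologicalSpace X] (A : Set X) {ε : ℝ≥0∞}
    (h0 : 0 < ε) (h1 : ε ≤ 1) (b : Ordinal.{u}) :
    oscSet (indf A) ε b = oscSet (indf A) 1 b :=
  oscSet_congr (fun s => by
    rw [indf_diam_lt_iff A h0 h1, indf_diam_lt_iff A zero_lt_one le_rfl]) b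

theorem oscSet_indf_compl {X : Type u} [TopologicalSpace X] (A : Set X) (b : Ordinal.{u}) :
    oscSet (indf Aᶜ) 1 b = oscSet (indf A) 1 b := by
  apply oscSet_congr
  intro s
  rw [indf_diam_lt_iff Aᶜ zero_lt_one le_rfl, indf_diam_lt_iff A zero_lt_one le_rfl]
  have key : ∀ x y : X, (indf Aᶜ x = indf Aᶜ y ↔ indf A x = indf A y) := by
    intro x y
    unfold indf
    by_cases hx : x ∈ A <;> by_cases hy : y ∈ A <;>
      simp [hx, hy, Set.indicator_of_mem, Set.indicator_of_notMem]
  constructor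
  · intro h x hx y hy
    exact (key x y).mp (h x hx y hy)
  · intro h x hx y hy
    exact (key x y).mpr (h x hx y hy)

theorem oscSet_indf_one_of_one_lt {X : Type u} [TopologicalSpace X] (A : Set X) {ε : ℝ≥0∞}
    (h1 : 1 < ε) : oscSet (indf A) ε 1 = Set.univ := by
  have h : (1 : Ordinal.{u}) = 0 + 1 := (zero_add 1).symm
  rw [h, oscSet_succ, oscSet_zero]
  ext x
  simp only [Set.mem_union, Set.mem_setOf_eq, Set.mem_univ, iff_true]
  right
  refine ⟨Set.notMem_empty x, Set.univ, isOpen_univ, Set.mem_univ x, ?_⟩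
  exact lt_of_le_of_lt (le_trans (EMetric.diam_mono (Set.image_mono (Set.diff_subset)))
    (indf_diam_le_one A _)) h1

theorem indf_comp {W : Type u} {Z : Type v} (g : W → Z) (S : Set Z) (x : W) :
    indf S (g x) = indf (g ⁻¹' S) x := by
  by_cases h : g x ∈ S
  · rw [indf, indf, Set.indicator_of_mem h, Set.indicator_of_mem (Set.mem_preimage.mpr h)]
  · rw [indf, indf, Set.indicator_of_notMem h,
      Set.indicator_of_notMem (fun hx => h (Set.mem_preimage.mp hx))]

/- ### Transfer of the derivation along open embeddings -/

theorem oscSet_preimage {X Y : Type u} {E : Type v} [TopologicalSpace X] [TopologicalSpace Y]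
    [PseudoEMetricSpace E] {e : X → Y} (hc : Continuous e) (hom : IsOpenMap e)
    (f : Y → E) (ε : ℝ≥0∞) (b : Ordinal.{u}) :
    e ⁻¹' oscSet f ε b = oscSet (f ∘ e) ε b := by
  induction b using Ordinal.limitRecOn with
  | zero => rw [oscSet_zero, oscSet_zero, Set.preimage_empty]
  | add_one b ih =>
    rw [oscSet_succ, oscSet_succ]
    ext x
    simp only [Set.mem_preimage, Set.mem_union, Set.mem_setOf_eq]
    constructor
    · rintro (h1 | ⟨h1, V, hV, hxV, hd⟩)
      · exact Or.inl (by rw [← ih]; exact h1)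
      · refine Or.inr ⟨by rw [← ih]; exact h1, e ⁻¹' V, hV.preimage hc, hxV, ?_⟩
        refine lt_of_le_of_lt (EMetric.diam_mono ?_) hd
        rintro _ ⟨z, ⟨hzV, hzD⟩, rfl⟩
        rw [← ih] at hzD
        exact ⟨e z, ⟨hzV, hzD⟩, rfl⟩
    · rintro (h1 | ⟨h1, W, hW, hxW, hd⟩)
      · left; rw [← ih] at h1; exact h1
      · refine Or.inr ⟨by intro hmem; rw [← ih] at h1; exact h1 hmem, e '' W, hom W hW,
          ⟨x, hxW, rfl⟩, ?_⟩
        have heq : e '' W \ oscSet f ε b = e '' (W \ e ⁻¹' oscSet f ε b) :=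
          (Set.image_diff_preimage).symm
        rw [heq, ← Set.image_comp, ih]
        exact hd
  | limit b hb ih =>
    rw [oscSet_limit _ _ hb, oscSet_limit _ _ hb, Set.preimage_iUnion₂]
    exact Set.iUnion₂_congr fun c hc => ih c hc

end Aux


section GlueSection
open Set Filter Topology

namespace Glue

noncomputable def r (n : ℕ) : ℝ := ((n : ℝ) + 1)⁻¹

theorem r_pos (n : ℕ) : 0 < r n := by unfold r; positivity

theorem r_le_one (n : ℕ) : r n ≤ 1 := by
  rw [r, inv_le_one_iff₀]; right; linarith [Nat.cast_nonneg (α := ℝ) n]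

theorem r_lt_of_lt {ε : ℝ} (hε : 0 < ε) : ∃ N : ℕ, ∀ n ≥ N, r n < ε := by
  obtain ⟨N, hN⟩ := exists_nat_gt ε⁻¹
  refine ⟨N, fun n hn => ?_⟩
  rw [r]
  have h1 : ε⁻¹ < (n : ℝ) + 1 := by
    have : (N : ℝ) ≤ n := Nat.cast_le.mpr hn
    linarith
  calc ((n:ℝ)+1)⁻¹ < (ε⁻¹)⁻¹ := by
        apply inv_strictAnti₀ (by positivity) h1
    _ = ε := inv_inv ε

variable {X : Type} [MetricSpace X]

/-- The glue space: a point at infinity together with countably many copies of `X`. -/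
abbrev GY (X : Type) := Option (ℕ × X)

noncomputable def gdist : GY X → GY X → ℝ
  | none, none => 0
  | none, some p => r p.1
  | some p, none => r p.1
  | some p, some q => if p.1 = q.1 then min (dist p.2 q.2) (2 * r p.1) else r p.1 + r q.1

theorem gdist_self (a : GY X) : gdist a a = 0 := by
  rcases a with _ | ⟨n, x⟩
  · rfl
  · show (if n = n then min (dist x x) (2 * r n) else _) = 0
    rw [if_pos rfl, dist_self]
    exact min_eq_left (by linarith [r_pos n])

theorem gdist_comm (a b : GY X) : gdist a b = gdist b a := by
  rcases a with _ | ⟨n, x⟩ <;> rcases b with _ | ⟨m, y⟩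
  · rfl
  · rfl
  · rfl
  · show (if n = m then min (dist x y) (2 * r n) else r n + r m) =
      (if m = n then min (dist y x) (2 * r m) else r m + r n)
    by_cases h : n = m
    · subst h; rw [if_pos rfl, if_pos rfl, dist_comm]
    · rw [if_neg h, if_neg (Ne.symm h)]; ring

theorem gdist_triangle (a b c : GY X) : gdist a c ≤ gdist a b + gdist b c := by
  rcases a with _ | ⟨n, x⟩ <;> rcases b with _ | ⟨m, y⟩ <;> rcases c with _ | ⟨k, z⟩
  · show (0:ℝ) ≤ 0 + 0; norm_num
  · show r k ≤ 0 + r k; norm_num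
  · show (0:ℝ) ≤ r m + r m; linarith [r_pos m]
  · show r k ≤ r m + (if m = k then min (dist y z) (2 * r m) else r m + r k)
    by_cases h : m = k
    · subst h; rw [if_pos rfl]
      have := le_min (dist_nonneg : (0:ℝ) ≤ dist y z) (by linarith [r_pos m] : (0:ℝ) ≤ 2 * r m)
      linarith
    · rw [if_neg h]; linarith [r_pos m]
  · show r n ≤ r n + 0; norm_num
  · show (if n = k then min (dist x z) (2 * r n) else r n + r k) ≤ r n + r k
    by_cases h : n = k
    · subst h; rw [if_pos rfl]
      exact le_trans (min_le_right _ _) (by linarith)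
    · rw [if_neg h]
  · show r n ≤ (if n = m then min (dist x y) (2 * r n) else r n + r m) + r m
    by_cases h : n = m
    · subst h; rw [if_pos rfl]
      have := le_min (dist_nonneg : (0:ℝ) ≤ dist x y) (by linarith [r_pos n] : (0:ℝ) ≤ 2 * r n)
      linarith
    · rw [if_neg h]; linarith [r_pos n, r_pos m]
  · show (if n = k then min (dist x z) (2 * r n) else r n + r k) ≤
      (if n = m then min (dist x y) (2 * r n) else r n + r m) +
      (if m = k then min (dist y z) (2 * r m) else r m + r k)
    by_cases h1 : n = m
    · subst h1
      by_cases h2 : n = k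
      · subst h2
        rw [if_pos rfl, if_pos rfl, if_pos rfl]
        by_cases hxy : dist x y ≤ 2 * r n
        · by_cases hyz : dist y z ≤ 2 * r n
          · rw [min_eq_left hxy, min_eq_left hyz]
            exact le_trans (min_le_left _ _) (dist_triangle x y z)
          · rw [min_eq_right (by linarith : 2 * r n ≤ dist y z)]
            have := le_min (dist_nonneg : (0:ℝ) ≤ dist x y) (by linarith [r_pos n] : (0:ℝ) ≤ 2 * r n)
            linarith [min_le_right (dist x z) (2 * r n)]
        · rw [min_eq_right (by linarith : 2 * r n ≤ dist x y)]
          have := le_min (dist_nonneg : (0:ℝ) ≤ dist y z) (by linarith [r_pos n] : (0:ℝ) ≤ 2 * r n)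
          linarith [min_le_right (dist x z) (2 * r n)]
      · rw [if_pos rfl, if_neg h2, if_neg h2]
        have := le_min (dist_nonneg : (0:ℝ) ≤ dist x y) (by linarith [r_pos n] : (0:ℝ) ≤ 2 * r n)
        linarith
    · by_cases h2 : m = k
      · subst h2
        rw [if_neg h1, if_neg h1, if_pos rfl]
        have := le_min (dist_nonneg : (0:ℝ) ≤ dist y z) (by linarith [r_pos m] : (0:ℝ) ≤ 2 * r m)
        linarith
      · rw [if_neg h1, if_neg h2]
        by_cases h3 : n = k
        · subst h3
          rw [if_pos rfl]
          have := min_le_right (dist x z) (2 * r n)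
          linarith [r_pos m]
        · rw [if_neg h3]
          linarith [r_pos m]

theorem gdist_eq_of_zero {a b : GY X} (h : gdist a b = 0) : a = b := by
  rcases a with _ | ⟨n, x⟩ <;> rcases b with _ | ⟨m, y⟩
  · rfl
  · exfalso
    have h2 : gdist (none : GY X) (some (m, y)) = r m := rfl
    rw [h2] at h; linarith [r_pos m]
  · exfalso
    have h2 : gdist (some (n, x) : GY X) none = r n := rfl
    rw [h2] at h; linarith [r_pos n]
  · by_cases h1 : n = m
    · subst h1
      rw [show gdist (some (n,x)) (some (n,y)) = min (dist x y) (2 * r n) from if_pos rfl] at h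
      have h2 : dist x y = 0 := by
        rcases min_eq_iff.mp h with ⟨h3, -⟩ | ⟨h3, -⟩
        · exact h3
        · linarith [r_pos n]
      rw [eq_of_dist_eq_zero h2]
    · rw [show gdist (some (n,x)) (some (m,y)) = r n + r m from if_neg h1] at h
      linarith [r_pos n, r_pos m]

noncomputable instance : MetricSpace (GY X) where
  dist := gdist
  dist_self := gdist_self
  dist_comm := gdist_comm
  dist_triangle := gdist_triangle
  eq_of_dist_eq_zero := gdist_eq_of_zero

theorem gdist_eq (a b : GY X) : dist a b = gdist a b := rfl

end Glue

namespace Glue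
variable {X : Type} [MetricSpace X]

/-- embedding of the `n`-th copy -/
def e (n : ℕ) : X → GY X := fun x => some (n, x)

theorem dist_e (n : ℕ) (x y : X) : dist (e n x) (e n y) = min (dist x y) (2 * r n) := by
  rw [gdist_eq]
  exact if_pos rfl

theorem dist_none_e (n : ℕ) (x : X) : dist (none : GY X) (e n x) = r n := rfl

theorem isUniformEmbedding_e (n : ℕ) : IsUniformEmbedding (e n : X → GY X) := by
  rw [Metric.isUniformEmbedding_iff']
  constructor
  · intro ε hε
    refine ⟨ε, hε, fun {a b} h => ?_⟩
    rw [dist_e]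
    exact lt_of_le_of_lt (min_le_left _ _) h
  · intro δ hδ
    refine ⟨min δ (2 * r n), lt_min hδ (by linarith [r_pos n]), fun {a b} h => ?_⟩
    rw [dist_e] at h
    have h2 : min (dist a b) (2 * r n) < 2 * r n :=
      lt_of_lt_of_le h (min_le_right _ _)
    have h3 : min (dist a b) (2 * r n) = dist a b := by
      rcases min_cases (dist a b) (2 * r n) with ⟨h4, -⟩ | ⟨h4, h5⟩
      · exact h4
      · rw [h4] at h2; linarith
    rw [h3] at h
    exact lt_of_lt_of_le h (min_le_left _ _)

theorem isOpen_range_e (n : ℕ) : IsOpen (Set.range (e n : X → GY X)) := by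
  rw [Metric.isOpen_iff]
  rintro _ ⟨x, rfl⟩
  refine ⟨r n, r_pos n, fun z hz => ?_⟩
  rw [Metric.mem_ball, dist_comm] at hz
  rcases z with _ | ⟨m, y⟩
  · rw [show dist (e n x) (none : GY X) = r n from rfl] at hz
    exact absurd hz (lt_irrefl _)
  · by_cases h : n = m
    · subst h; exact ⟨y, rfl⟩
    · rw [show dist (e n x) (some (m, y) : GY X) = r n + r m from if_neg h] at hz
      exfalso; linarith [r_pos m]

theorem isOpenEmbedding_e (n : ℕ) : IsOpenEmbedding (e n : X → GY X) :=
  ⟨(isUniformEmbedding_e n).isEmbedding, isOpen_range_e n⟩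

theorem nbhd_none {V : Set (GY X)} (hV : IsOpen V) (hnV : (none : GY X) ∈ V) :
    ∃ N : ℕ, ∀ n ≥ N, ∀ x : X, e n x ∈ V := by
  obtain ⟨ε, hε, hball⟩ := Metric.isOpen_iff.mp hV none hnV
  obtain ⟨N, hN⟩ := r_lt_of_lt hε
  refine ⟨N, fun n hn x => hball ?_⟩
  rw [Metric.mem_ball, dist_comm, dist_none_e]
  exact hN n hn

instance [CompleteSpace X] : CompleteSpace (GY X) := by
  apply Metric.complete_of_cauchySeq_tendsto
  intro u hu
  by_cases hA : ∀ ε > 0, ∀ N : ℕ, ∃ k ≥ N, dist (u k) none < ε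
  · refine ⟨none, ?_⟩
    rw [Metric.tendsto_atTop]
    intro ε hε
    obtain ⟨N, hN⟩ := Metric.cauchySeq_iff.mp hu (ε / 2) (by linarith)
    obtain ⟨k, hk, hdk⟩ := hA (ε / 2) (by linarith) N
    refine ⟨N, fun n hn => ?_⟩
    calc dist (u n) none ≤ dist (u n) (u k) + dist (u k) none := dist_triangle _ _ _
      _ < ε / 2 + ε / 2 := by
          have := hN n hn k hk
          linarith
      _ = ε := by ring
  · push_neg at hA
    obtain ⟨ε, hε, N, hN⟩ := hA
    obtain ⟨N2, hN2⟩ := Metric.cauchySeq_iff.mp hu ε hε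
    set M := max N N2 with hM
    -- the M-th term is in some copy
    have hM1 : ∀ k ≥ M, ∃ n x, u k = some (n, x) ∧ ε ≤ r n := by
      intro k hk
      rcases huk : u k with _ | ⟨n, x⟩
      · exfalso
        have := hN k (le_trans (le_max_left _ _) hk)
        rw [huk] at this
        simp only [dist_self] at this
        linarith
      · refine ⟨n, x, rfl, ?_⟩
        have := hN k (le_trans (le_max_left _ _) hk)
        rw [huk] at this
        rw [show dist (some (n,x) : GY X) none = r n from rfl] at this
        linarith
    obtain ⟨n0, x0, hux0, hrn0⟩ := hM1 M le_rfl
    have hsame : ∀ k ≥ M, u k ∈ Set.range (e n0 : X → GY X) := by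
      intro k hk
      obtain ⟨n, x, hux, hrn⟩ := hM1 k hk
      by_cases h : n = n0
      · subst h; rw [hux]; exact ⟨x, rfl⟩
      · exfalso
        have hd := hN2 k (le_trans (le_max_right _ _) hk) M (le_max_right _ _)
        rw [hux, hux0] at hd
        rw [show dist (some (n,x) : GY X) (some (n0, x0)) = r n + r n0 from if_neg h] at hd
        linarith
    have hcomplete : IsComplete (Set.range (e n0 : X → GY X)) :=
      (isUniformEmbedding_e n0).isUniformInducing.isComplete_range
    have hv : CauchySeq (fun k => u (k + M)) :=
      hu.comp_tendsto (tendsto_add_atTop_nat M)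
    obtain ⟨a, -, ha⟩ := cauchySeq_tendsto_of_isComplete hcomplete
      (fun k => hsame (k + M) (Nat.le_add_left M k)) hv
    exact ⟨a, (tendsto_add_atTop_iff_nat M).mp ha⟩

end Glue

end GlueSection

section Main

open Set Filter Ordinal ENNReal Topology Cardinal

/-- The main inductive construction: for every countable ordinal there is a complete metric
space and a subset whose indicator's derivation (for `ε = 1`) first reaches `univ` exactly
at that ordinal. -/
def RankExactly (a : Ordinal.{0}) : Prop :=
  ∃ (X : Type) (m : MetricSpace X),
    @CompleteSpace X m.toUniformSpace ∧
    ∃ A : Set X,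
      @oscSet X ℝ m.toUniformSpace.toTopologicalSpace _ (indf A) 1 a = Set.univ ∧
      ∀ b < a, @oscSet X ℝ m.toUniformSpace.toTopologicalSpace _ (indf A) 1 b ≠ Set.univ

theorem rankExactly_of_lt_omega1 : ∀ a : Ordinal.{0}, a < ω₁ → RankExactly a := by
  intro a
  induction a using Ordinal.induction with
  | h a IH =>
  intro ha
  rcases Ordinal.zero_or_succ_or_isSuccLimit a with rfl | ⟨b, rfl⟩ | hlim
  · -- zero : the empty space
    refine ⟨Empty, inferInstance, inferInstance, ∅, ?_, ?_⟩
    · rw [oscSet_zero]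
      exact (Set.univ_eq_empty_iff.mpr inferInstance).symm
    · intro b hb
      exact absurd hb not_lt_zero
  · -- successor : the glue space
    have hb_lt : b < Order.succ b := Order.lt_succ b
    obtain ⟨X, m, hcomp, A, hAa, hAb⟩ := IH b hb_lt (lt_trans hb_lt ha)
    letI := m
    letI := hcomp
    set AY : Set (Glue.GY X) :=
      {y | ∃ p : ℕ × X, y = some p ∧ (if Even p.1 then p.2 ∈ A else p.2 ∉ A)} with hAY
    have hpre : ∀ n : ℕ, (Glue.e n : X → Glue.GY X) ⁻¹' AY
        = if Even n then A else Aᶜ := by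
      intro n
      ext x
      simp only [Set.mem_preimage, hAY, Set.mem_setOf_eq]
      constructor
      · rintro ⟨⟨n', x'⟩, heq, hcond⟩
        have h2 : ((n, x) : ℕ × X) = (n', x') := Option.some.inj heq
        injection h2 with h3 h4
        subst h3
        subst h4
        by_cases hn : Even n
        · rw [if_pos hn] at hcond ⊢; exact hcond
        · rw [if_neg hn] at hcond ⊢; exact hcond
      · intro hx
        refine ⟨(n, x), rfl, ?_⟩
        by_cases hn : Even n
        · rw [if_pos hn] at hx ⊢; exact hx
        · rw [if_neg hn] at hx ⊢; exact hx
    have hpull : ∀ (n : ℕ) (c : Ordinal.{0}),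
        (Glue.e n : X → Glue.GY X) ⁻¹' (oscSet (indf AY) 1 c) = oscSet (indf A) 1 c := by
      intro n c
      rw [oscSet_preimage (Glue.isOpenEmbedding_e n).continuous
        (Glue.isOpenEmbedding_e n).isOpenMap]
      have hcompind : indf AY ∘ (Glue.e n : X → Glue.GY X)
          = indf ((Glue.e n : X → Glue.GY X) ⁻¹' AY) := funext fun x => indf_comp _ _ x
      rw [hcompind, hpre n]
      by_cases hn : Even n
      · rw [if_pos hn]
      · rw [if_neg hn]
        exact oscSet_indf_compl A c
    have hne : ∀ (x : X) (n m : ℕ), Even n → ¬ Even m →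
        indf AY (Glue.e n x) ≠ indf AY (Glue.e m x) := by
      intro x n m hn hm
      rw [indf_comp (Glue.e n) AY x, indf_comp (Glue.e m) AY x, hpre n, hpre m,
        if_pos hn, if_neg hm]
      by_cases hx : x ∈ A
      · rw [indf, indf, Set.indicator_of_mem hx, Set.indicator_of_notMem (by simpa using hx)]
        norm_num
      · rw [indf, indf, Set.indicator_of_notMem hx, Set.indicator_of_mem (by simpa using hx)]
        norm_num
    have claim1 : ∀ c : Ordinal.{0}, c ≤ b → (none : Glue.GY X) ∉ oscSet (indf AY) 1 c := by
      intro c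
      induction c using Ordinal.induction with
      | h c IHc =>
      intro hcb hmem
      rcases Ordinal.zero_or_succ_or_isSuccLimit c with rfl | ⟨d, rfl⟩ | hclim
      · rw [oscSet_zero] at hmem
        exact hmem
      · rw [← Ordinal.add_one_eq_succ, oscSet_succ] at hmem
        have hd_lt : d < Order.succ d := Order.lt_succ d
        have hdb : d ≤ b := le_trans (le_of_lt hd_lt) hcb
        rcases hmem with hmem | ⟨-, V, hV, hnV, hdiam⟩
        · exact IHc d hd_lt hdb hmem
        · obtain ⟨N, hN⟩ := Glue.nbhd_none hV hnV
          have hDlt : d < b := lt_of_lt_of_le (Order.lt_succ d) hcb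
          obtain ⟨x0, hx0⟩ : ∃ x0, x0 ∉ oscSet (indf A) 1 d := by
            by_contra hcontra
            push_neg at hcontra
            exact hAb d hDlt (Set.eq_univ_of_forall hcontra)
          have h1 : Glue.e (2*N) x0 ∈ V := hN (2*N) (by omega) x0
          have h2 : Glue.e (2*N+1) x0 ∈ V := hN (2*N+1) (by omega) x0
          have h1' : Glue.e (2*N) x0 ∉ oscSet (indf AY) 1 d := by
            intro hc
            exact hx0 (by rw [← hpull (2*N) d]; exact hc)
          have h2' : Glue.e (2*N+1) x0 ∉ oscSet (indf AY) 1 d := by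
            intro hc
            exact hx0 (by rw [← hpull (2*N+1) d]; exact hc)
          have hconst := (indf_diam_lt_iff AY zero_lt_one le_rfl _).mp hdiam
          exact hne x0 (2*N) (2*N+1) (even_two_mul N) (by simp [Nat.even_add_one])
            (hconst _ ⟨h1, h1'⟩ _ ⟨h2, h2'⟩)
      · rw [oscSet_limit _ _ hclim] at hmem
        obtain ⟨d, hd, hmem⟩ := Set.mem_iUnion₂.mp hmem
        exact IHc d hd (le_trans (le_of_lt hd) hcb) hmem
    have hcopies : ∀ (n : ℕ) (x : X), Glue.e n x ∈ oscSet (indf AY) 1 b := by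
      intro n x
      have hx : x ∈ (Glue.e n : X → Glue.GY X) ⁻¹' oscSet (indf AY) 1 b := by
        rw [hpull n b, hAa]
        trivial
      exact hx
    have claim2 : oscSet (indf AY) 1 (b + 1) = Set.univ := by
      rw [oscSet_succ]
      apply Set.eq_univ_of_forall
      rintro (_ | ⟨n, x⟩)
      · refine Set.mem_union_right _ ⟨claim1 b le_rfl, Set.univ, isOpen_univ, trivial, ?_⟩
        have hsub : Set.univ \ oscSet (indf AY) 1 b ⊆ {(none : Glue.GY X)} := by
          rintro (_ | ⟨n, x⟩) ⟨-, hy⟩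
          · exact Set.mem_singleton _
          · exact absurd (hcopies n x) hy
        have hzero : EMetric.diam (indf AY '' {(none : Glue.GY X)}) = 0 :=
          EMetric.diam_subsingleton (Set.subsingleton_singleton.image _)
        refine lt_of_le_of_lt (EMetric.diam_mono (Set.image_mono hsub)) ?_
        rw [show Metric.ediam (indf AY '' {(none : Glue.GY X)}) = 0 from hzero]
        exact zero_lt_one
      · exact Set.mem_union_left _ (hcopies n x)
    refine ⟨Glue.GY X, inferInstance, inferInstance, AY, ?_, ?_⟩
    · rw [← Ordinal.add_one_eq_succ]
      exact claim2
    · intro c hc huniv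
      have hcb : c ≤ b := Order.lt_succ_iff.mp hc
      exact claim1 c hcb (huniv ▸ trivial)
  · -- limit : disjoint union
    have h0 : 0 < a := hlim.pos
    haveI : Countable (Set.Iio a) := by
      have hc : (Set.Iio a).Countable := by
        rw [countable_iff_lt_aleph_one, Cardinal.mk_Iio_ordinal, lift_lt_aleph_one]
        rw [← Cardinal.ord_aleph, Cardinal.lt_ord] at ha
        exact ha
      exact hc.to_subtype
    haveI : Nonempty (Set.Iio a) := ⟨⟨0, h0⟩⟩
    obtain ⟨g, hg⟩ := exists_surjective_nat (Set.Iio a)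
    have hQ : ∀ n : ℕ, RankExactly (g n : Ordinal.{0}) :=
      fun n => IH (g n) (g n).2 (lt_trans (g n).2 ha)
    choose T mT cT A' hA'1 hA'2 using hQ
    letI : ∀ n, MetricSpace (T n) := mT
    haveI : ∀ n, CompleteSpace (T n) := cT
    letI mS : MetricSpace (Σ n, T n) := Metric.Sigma.metricSpace
    haveI cS : CompleteSpace (Σ n, T n) := Metric.Sigma.completeSpace
    set AS : Set (Σ n, T n) := {p | p.2 ∈ A' p.1} with hAS
    have hpullS : ∀ (n : ℕ) (c : Ordinal.{0}),
        (Sigma.mk n : T n → Σ n, T n) ⁻¹' oscSet (indf AS) 1 c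
          = oscSet (indf (A' n)) 1 c := by
      intro n c
      rw [oscSet_preimage continuous_sigmaMk isOpenMap_sigmaMk]
      have hcompind : indf AS ∘ (Sigma.mk n : T n → Σ n, T n) = indf (A' n) :=
        funext fun x => (indf_comp (Sigma.mk n) AS x)
      rw [hcompind]
    refine ⟨Σ n, T n, mS, cS, AS, ?_, ?_⟩
    · rw [oscSet_limit _ _ hlim]
      apply Set.eq_univ_of_forall
      rintro ⟨n, x⟩
      apply Set.mem_iUnion₂.mpr
      refine ⟨(g n : Ordinal.{0}), (g n).2, ?_⟩
      have hx : x ∈ (Sigma.mk n : T n → Σ n, T n) ⁻¹' oscSet (indf AS) 1 (g n : Ordinal) := by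
        rw [hpullS n, hA'1 n]
        trivial
      exact hx
    · intro c hc huniv
      have hsucc_lt : Order.succ c < a := hlim.succ_lt hc
      obtain ⟨n, hn⟩ := hg ⟨Order.succ c, hsucc_lt⟩
      have hcn : c < (g n : Ordinal.{0}) := by
        rw [hn]
        exact Order.lt_succ c
      obtain ⟨x0, hx0⟩ : ∃ x0, x0 ∉ oscSet (indf (A' n)) 1 c := by
        by_contra hcontra
        push_neg at hcontra
        exact hA'2 n c hcn (Set.eq_univ_of_forall hcontra)
      apply hx0
      rw [← hpullS n c]
      have : Sigma.mk n x0 ∈ oscSet (indf AS) 1 c := huniv ▸ trivial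
      exact this

end Main


/-- for every countable ordinal `a` there is a completely metrizable space
`X` and `A ⊆ X` whose characteristic function has oscillation rank exactly `a`. -/
theorem stmt_18 (a : Ordinal.{0}) (ha : a < ω₁) :
    ∃ (X : Type) (m : MetricSpace X),
      @CompleteSpace X m.toUniformSpace ∧
      ∃ A : Set X,
        @IndicatorOscRankExactly X m.toUniformSpace.toTopologicalSpace A a := by
  obtain ⟨X, m, hcomp, A, hAa, hAb⟩ := rankExactly_of_lt_omega1 a ha
  letI := m
  refine ⟨X, m, hcomp, A, ?_, ?_⟩
  · -- upper bound
    intro ε hε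
    by_cases hε1 : ε ≤ 1
    · refine ⟨a, le_rfl, ?_⟩
      show oscSet (indf A) ε a = Set.univ
      rw [oscSet_indf_eps A hε hε1]
      exact hAa
    · by_cases haz : a = 0
      · subst haz
        refine ⟨0, le_rfl, ?_⟩
        show oscSet (indf A) ε 0 = Set.univ
        rw [oscSet_zero] at hAa ⊢
        exact hAa
      · refine ⟨1, Ordinal.one_le_iff_ne_zero.mpr haz, ?_⟩
        show oscSet (indf A) ε 1 = Set.univ
        exact oscSet_indf_one_of_one_lt A (not_le.mp hε1)
  · -- lower bound
    intro a' ha'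
    refine ⟨1, zero_lt_one, fun b hb => ?_⟩
    show oscSet (indf A) 1 b ≠ Set.univ
    exact hAb b (lt_of_le_of_lt hb ha')
end

section
/- Let X be a second countable topological space, E a metrizable space, and H a relatively compact subset of E^X with the product (pointwise convergence) topology. Then sup over f in the pointwise closure of H of frag(f) equals sup over sequences φ in H of the infimum of frag(f) over cluster points f of φ. -/
open Set Filter Ordinal ENNReal

universe u v

/-- for `X` second countable, `E` metrizable and `H` relatively compact in
`(E^X, τ_p)`, the sup of `frag` over the pointwise closure of `H` equals the sup over
sequences in `H` of the inf of `frag` over their cluster points. -/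
theorem stmt_19 {X E : Type*} [TopologicalSpace X] [SecondCountableTopology X]
    [MetricSpace E] (H : Set (X → E)) (hH : IsCompact (closure H)) :
    ⨆ f ∈ closure H, fragIdx f =
      ⨆ (phi : ℕ → X → E) (_ : ∀ n, phi n ∈ H),
        ⨅ (f : X → E) (_ : MapClusterPt f Filter.atTop phi), fragIdx f := by
  apply le_antisymm
  · -- hard direction: sup over closure ≤ sup over sequences
    refine iSup₂_le fun f hf => ?_
    refine le_of_forall_lt fun ε hε => ?_
    obtain ⟨ε', hεε', hε'f⟩ := exists_between hε
    refine lt_of_lt_of_le hεε' ?_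
    have hnot : ¬ EpsFragOn f Set.univ ε' := by
      intro h
      have : fragIdx f ≤ ε' := sInf_le ⟨(zero_le : (0 : ℝ≥0∞) ≤ ε).trans_lt hεε', h⟩
      exact absurd this (not_le.mpr hε'f)
    rw [EpsFragOn] at hnot
    push_neg at hnot
    obtain ⟨F, -, hFne, hF⟩ := hnot
    have key : ∀ V : Set X, IsOpen V → (V ∩ F).Nonempty →
        ∃ x ∈ V ∩ F, ∃ y ∈ V ∩ F, ε' < edist (f x) (f y) := by
      intro V hV hne
      by_contra h
      push_neg at h
      refine absurd (hF V hV hne) (not_lt.mpr (EMetric.diam_le ?_))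
      rintro _ ⟨x, hx, rfl⟩ _ ⟨y, hy, rfl⟩
      exact h x hx y hy
    have hB := TopologicalSpace.isBasis_countableBasis X
    set B := TopologicalSpace.countableBasis X with hBdef
    set T : Set (Set X) := {b ∈ B | (b ∩ F).Nonempty} with hTdef
    haveI hTcount : Countable T :=
      ((TopologicalSpace.countable_countableBasis X).mono (Set.sep_subset _ _)).to_subtype
    have hex : ∀ b : T, ∃ p : X × X, p.1 ∈ (b : Set X) ∩ F ∧ p.2 ∈ (b : Set X) ∩ F ∧
        ε' < edist (f p.1) (f p.2) := by
      rintro ⟨b, hbB, hbne⟩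
      obtain ⟨x, hx, y, hy, hd⟩ := key b (hB.isOpen hbB) hbne
      exact ⟨(x, y), hx, hy, hd⟩
    choose q hq1 hq2 hqd using hex
    set C : Set X := (Set.range fun b : T => (q b).1) ∪ (Set.range fun b : T => (q b).2)
      with hCdef
    have hCc : C.Countable := (Set.countable_range _).union (Set.countable_range _)
    have hCF : C ⊆ F := by
      rintro x (⟨b, rfl⟩ | ⟨b, rfl⟩)
      exacts [(hq1 b).2, (hq2 b).2]
    obtain ⟨x0, hx0⟩ := hFne
    obtain ⟨b0, hb0B, hxb0, -⟩ := hB.exists_subset_of_mem_open (Set.mem_univ x0) isOpen_univ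
    have hb0T : b0 ∈ T := ⟨hb0B, ⟨x0, hxb0, hx0⟩⟩
    have hCne : C.Nonempty := ⟨(q ⟨b0, hb0T⟩).1, Or.inl (Set.mem_range_self _)⟩
    obtain ⟨c, hc⟩ := hCc.exists_eq_range hCne
    -- build a sequence in H converging to f pointwise on C
    have hφex : ∀ n : ℕ, ∃ h ∈ H, ∀ i ≤ n,
        edist (h (c i)) (f (c i)) < ((n : ℝ≥0∞) + 1)⁻¹ := by
      intro n
      have hpos : (0 : ℝ≥0∞) < ((n : ℝ≥0∞) + 1)⁻¹ :=
        ENNReal.inv_pos.mpr (ENNReal.add_ne_top.mpr ⟨ENNReal.natCast_ne_top n, ENNReal.one_ne_top⟩)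
      have hnb : (⋂ i ∈ Finset.range (n + 1),
          (fun h : X → E => h (c i)) ⁻¹' Metric.eball (f (c i)) ((n : ℝ≥0∞) + 1)⁻¹) ∈ nhds f := by
        refine (Filter.biInter_finset_mem _).mpr fun i _ => ?_
        exact (continuous_apply (c i)).continuousAt.preimage_mem_nhds
          (EMetric.ball_mem_nhds _ hpos)
      obtain ⟨h, hh1, hh2⟩ := mem_closure_iff_nhds.mp hf _ hnb
      refine ⟨h, hh2, fun i hi => ?_⟩
      have := Set.mem_iInter₂.mp hh1 i (Finset.mem_range.mpr (Nat.lt_succ_of_le hi))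
      simpa [Metric.mem_eball] using this
    choose φ hφH hφd using hφex
    have htend : ∀ i, Filter.Tendsto (fun n => φ n (c i)) Filter.atTop (nhds (f (c i))) := by
      intro i
      rw [EMetric.tendsto_atTop]
      intro δ hδ
      obtain ⟨N, hN⟩ := ENNReal.exists_inv_nat_lt (ne_of_gt hδ)
      refine ⟨max i N, fun n hn => ?_⟩
      calc edist (φ n (c i)) (f (c i)) < ((n : ℝ≥0∞) + 1)⁻¹ :=
            hφd n i (le_trans (le_max_left i N) hn)
        _ ≤ ((N : ℝ≥0∞))⁻¹ := by
            refine ENNReal.inv_le_inv.mpr ?_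
            exact_mod_cast Nat.le_succ_of_le (le_trans (le_max_right i N) hn)
        _ < δ := hN
    -- every cluster point of φ agrees with f on C
    have hgf : ∀ g : X → E, MapClusterPt g Filter.atTop φ → ∀ z ∈ Set.range c, g z = f z := by
      rintro g hg _ ⟨i, rfl⟩
      have h1 : MapClusterPt (g (c i)) Filter.atTop ((fun h : X → E => h (c i)) ∘ φ) :=
        hg.continuousAt_comp (continuous_apply (c i)).continuousAt
      have h2 : ClusterPt (g (c i)) (nhds (f (c i))) := h1.clusterPt.mono (htend i)
      exact eq_of_nhds_neBot h2
    -- hence every cluster point g has fragIdx g ≥ ε'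
    have hfrag : ∀ g : X → E, MapClusterPt g Filter.atTop φ → ε' ≤ fragIdx g := by
      intro g hg
      refine le_sInf fun δ hδ => ?_
      obtain ⟨hδ0, hδfrag⟩ := hδ
      by_contra hlt
      push_neg at hlt
      obtain ⟨V, hVopen, hVne, hVdiam⟩ :=
        hδfrag (Set.range c) (Set.subset_univ _) ⟨c 0, Set.mem_range_self 0⟩
      obtain ⟨z, hzV, hzC⟩ := hVne
      have hzF : z ∈ F := hCF (by rw [hc]; exact hzC)
      obtain ⟨b, hbB, hzb, hbV⟩ := hB.exists_subset_of_mem_open hzV hVopen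
      have hbT : b ∈ T := ⟨hbB, ⟨z, hzb, hzF⟩⟩
      have hx1 : (q ⟨b, hbT⟩).1 ∈ V ∩ Set.range c :=
        ⟨hbV (hq1 ⟨b, hbT⟩).1, by rw [← hc]; exact Or.inl (Set.mem_range_self _)⟩
      have hx2 : (q ⟨b, hbT⟩).2 ∈ V ∩ Set.range c :=
        ⟨hbV (hq2 ⟨b, hbT⟩).1, by rw [← hc]; exact Or.inr (Set.mem_range_self _)⟩
      have hle : edist (g (q ⟨b, hbT⟩).1) (g (q ⟨b, hbT⟩).2) ≤ δ :=
        le_trans (EMetric.edist_le_diam_of_mem (Set.mem_image_of_mem g hx1)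
          (Set.mem_image_of_mem g hx2)) hVdiam
      rw [hgf g hg _ hx1.2, hgf g hg _ hx2.2] at hle
      exact absurd ((hqd ⟨b, hbT⟩).trans_le hle) (not_lt.mpr hlt.le)
    exact le_iSup₂_of_le φ hφH (le_iInf₂ hfrag)
  · -- easy direction
    refine iSup₂_le fun φ hφ => ?_
    have hle : Filter.map φ Filter.atTop ≤ 𝓟 (closure H) :=
      Filter.le_principal_iff.mpr
        (Filter.mem_map.mpr (Filter.univ_mem' fun n => subset_closure (hφ n)))
    obtain ⟨g, hgH, hg⟩ := hH.exists_clusterPt hle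
    have hg' : MapClusterPt g Filter.atTop φ := hg
    exact le_trans (iInf₂_le g hg') (le_iSup₂_of_le g hgH le_rfl)
end
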